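/- Let f ∈ L^p(X, Y) with support in a ball B(x₀, δ^m), and suppose h = f/b₁ is L-Lipschitz, where b₁ ∈ L^∞(μ) with ‖b₁‖_∞ ≤ C_b and μ is upper doubling with dominating function λ. Let E^{b₁}_{k₀}f = Σ_α ⟨f⟩_{Q^{k₀}_α} ⟨b₁⟩_{Q^{k₀}_α}^{−1} χ_{Q^{k₀}_α} b₁ be the adapted conditional expectation over dyadic cubes of generation k₀ ≥ m with diameter ≤ C₀ δ^{k₀}, on cubes where |⟨b₁⟩_Q| ≥ a > 0. Then ‖f − E^{b₁}_{k₀} f‖_{L^p(X,Y)} ≤ C L λ(x₀, δ^m)^{1/p} δ^{k₀}. -/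

import Mathlib

open MeasureTheory Metric

/-- Iterated doubling for the dominating function. -/
lemma lam_doub_iter {X : Type} (Cl : ℝ) (lam : X → ℝ → ℝ) (hCl : 1 ≤ Cl)
    (hdoub : ∀ x r, 0 < r → lam x (2 * r) ≤ Cl * lam x r) :
    ∀ (n : ℕ) (x : X) (r : ℝ), 0 < r → lam x (2 ^ n * r) ≤ Cl ^ n * lam x r := by
  intro n
  induction n with
  | zero => intro x r hr; simp
  | succ n ih =>
      intro x r hr
      have h1 : (2 : ℝ) ^ (n + 1) * r = 2 * (2 ^ n * r) := by ring
      have h2 : 0 < (2 : ℝ) ^ n * r := by positivity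
      calc lam x (2 ^ (n + 1) * r) = lam x (2 * (2 ^ n * r)) := by rw [h1]
        _ ≤ Cl * lam x (2 ^ n * r) := hdoub x _ h2
        _ ≤ Cl * (Cl ^ n * lam x r) := by
            have := ih x r hr
            nlinarith [this, (by linarith : (0:ℝ) < Cl)]
        _ = Cl ^ (n + 1) * lam x r := by ring

set_option maxHeartbeats 1000000 in
theorem stmt19 (N : ℕ) (hN : 1 ≤ N) (Cl a Cb C₀ p δ : ℝ)
    (hCl : 1 ≤ Cl) (ha : 0 < a) (hCb : 0 < Cb) (hC₀ : 0 < C₀)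
    (hp : 1 < p) (hδ0 : 0 < δ) (hδ1 : δ < 1) :
    ∃ C : ℝ, 0 < C ∧
      ∀ (X : Type) [MeasurableSpace X] [MetricSpace X]
        (Y : Type) [NormedAddCommGroup Y] [NormedSpace ℂ Y] [CompleteSpace Y]
        (μ : Measure X) (lam : X → ℝ → ℝ),
        -- geometric doubling
        (∀ (x : X) (r : ℝ), 0 < r → ∃ t : Finset X, t.card ≤ N ∧
          ball x r ⊆ ⋃ c ∈ t, ball c (r / 2)) →
        -- upper doubling
        (∀ x r, 0 < r → 0 < lam x r) →
        (∀ x r s, 0 < r → r ≤ s → lam x r ≤ lam x s) →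
        (∀ x r, 0 < r → lam x (2 * r) ≤ Cl * lam x r) →
        (∀ x r, 0 < r → μ (ball x r) ≤ ENNReal.ofReal (lam x r)) →
        ∀ (m k₀ : ℤ), m ≤ k₀ →
        ∀ (x₀ : X) (b₁ : X → ℂ) (h : X → Y) (L : ℝ) (f : X → Y),
        0 ≤ L →
        (∀ x, ‖b₁ x‖ ≤ Cb) →
        (∀ x y, ‖h x - h y‖ ≤ L * dist x y) →
        f = (fun x => b₁ x • h x) →
        (∀ x, x ∉ ball x₀ (δ ^ m) → f x = 0) →
        MemLp f (ENNReal.ofReal p) μ →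
        -- dyadic cubes of generation k₀
        ∀ (Qc : ℕ → Set X),
        (∀ i, MeasurableSet (Qc i)) →
        (Pairwise fun i j => Disjoint (Qc i) (Qc j)) →
        (⋃ i, Qc i) = Set.univ →
        (∀ i, EMetric.diam (Qc i) ≤ ENNReal.ofReal (C₀ * δ ^ k₀)) →
        (∀ i, 0 < μ (Qc i) → μ (Qc i) ≠ ⊤) →
        (∀ i, 0 < μ (Qc i) →
          a ≤ ‖(μ (Qc i)).toReal⁻¹ • ∫ x in Qc i, b₁ x ∂μ‖) →
        eLpNorm
          (fun x => f x -
            ∑' i, Set.indicator (Qc i)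
              (fun y => ((μ (Qc i)).toReal⁻¹ • ∫ z in Qc i, b₁ z ∂μ)⁻¹ •
                b₁ y • ((μ (Qc i)).toReal⁻¹ • ∫ z in Qc i, f z ∂μ)) x)
          (ENNReal.ofReal p) μ ≤
        ENNReal.ofReal (C * L * (lam x₀ (δ ^ m)) ^ (1 / p) * δ ^ k₀) := by
  classical
  obtain ⟨n, hn⟩ : ∃ n : ℕ, 1 + C₀ < 2 ^ n := pow_unbounded_of_one_lt _ one_lt_two
  have hCln : (1:ℝ) ≤ Cl ^ n := one_le_pow₀ hCl
  refine ⟨a⁻¹ * Cb ^ 2 * C₀ * Cl ^ n, by positivity, ?_⟩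
  intro X _ _ Y _ _ _ μ lam hgeo hlam0 hlammono hlamdoub hμlam m k₀ hmk x₀ b₁ h L f hL hb₁
    hLip hf hsupp hfp Qc hQmeas hQdisj hQcover hQdiam hQfin hQavg
  set pe := ENNReal.ofReal p with hpe
  have hδm : (0:ℝ) < δ ^ m := zpow_pos hδ0 m
  have hδk : (0:ℝ) < δ ^ k₀ := zpow_pos hδ0 k₀
  have hδkm : δ ^ k₀ ≤ δ ^ m := zpow_le_zpow_right_of_le_one₀ hδ0 hδ1.le hmk
  set M : ℝ := a⁻¹ * Cb ^ 2 * C₀ * L * δ ^ k₀ with hM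
  have hM0 : 0 ≤ M := by positivity
  set R : ℝ := (1 + C₀) * δ ^ m with hR
  have hR0 : 0 < R := by positivity
  -- the exceptional null set
  set Nset : Set X := ⋃ i, if μ (Qc i) = 0 then Qc i else ∅ with hNset
  have hNnull : μ Nset = 0 := by
    rw [hNset, measure_iUnion_null_iff]
    intro i
    split_ifs with hi
    · exact hi
    · simp
  -- distance bound within a cube
  have hdiam : ∀ i, ∀ x ∈ Qc i, ∀ z ∈ Qc i, dist x z ≤ C₀ * δ ^ k₀ := by
    intro i x hx z hz
    have h1 : edist x z ≤ ENNReal.ofReal (C₀ * δ ^ k₀) :=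
      le_trans (EMetric.edist_le_diam_of_mem hx hz) (hQdiam i)
    have := ENNReal.toReal_mono ENNReal.ofReal_ne_top h1
    rwa [ENNReal.toReal_ofReal (by positivity), ← dist_edist] at this
  set B : Set X := ⋃ i, if (Qc i ∩ ball x₀ (δ ^ m)).Nonempty then Qc i else ∅ with hB
  have hBmeas : MeasurableSet B := by
    rw [hB]
    apply MeasurableSet.iUnion
    intro i
    split_ifs
    · exact hQmeas i
    · exact MeasurableSet.empty
  have hBsub : B ⊆ ball x₀ R := by
    rw [hB]
    intro y hy
    obtain ⟨i, hyi⟩ := Set.mem_iUnion.mp hy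
    by_cases hne : (Qc i ∩ ball x₀ (δ ^ m)).Nonempty
    · rw [if_pos hne] at hyi
      obtain ⟨q, hqQ, hqball⟩ := hne
      rw [mem_ball]
      calc dist y x₀ ≤ dist y q + dist q x₀ := dist_triangle _ _ _
        _ < C₀ * δ ^ k₀ + δ ^ m := by
            have := hdiam i y hyi q hqQ
            have := mem_ball.mp hqball
            linarith
        _ ≤ R := by rw [hR]; nlinarith
    · rw [if_neg hne] at hyi; exact absurd hyi (Set.notMem_empty y)
  -- pointwise a.e. bound
  have key : ∀ᵐ x ∂μ, ‖f x -
      ∑' i, Set.indicator (Qc i)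
        (fun y => ((μ (Qc i)).toReal⁻¹ • ∫ z in Qc i, b₁ z ∂μ)⁻¹ •
          b₁ y • ((μ (Qc i)).toReal⁻¹ • ∫ z in Qc i, f z ∂μ)) x‖ ≤
      ‖Set.indicator B (fun _ => M) x‖ := by
    filter_upwards [compl_mem_ae_iff.mpr hNnull] with x hxN
    obtain ⟨i, hxi⟩ : ∃ i, x ∈ Qc i := by
      have : x ∈ ⋃ i, Qc i := by rw [hQcover]; trivial
      exact Set.mem_iUnion.mp this
    have hμi : μ (Qc i) ≠ 0 := by
      intro h0
      exact hxN (Set.mem_iUnion.mpr ⟨i, by simp [h0, hxi]⟩)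
    have hμipos : 0 < μ (Qc i) := pos_iff_ne_zero.mpr hμi
    have hμitop : μ (Qc i) ≠ ⊤ := hQfin i hμipos
    set r : ℝ := (μ (Qc i)).toReal with hr
    have hr0 : 0 < r := ENNReal.toReal_pos hμi hμitop
    set c : ℂ := r⁻¹ • ∫ z in Qc i, b₁ z ∂μ with hc
    set v : Y := r⁻¹ • ∫ z in Qc i, f z ∂μ with hv
    have hca : a ≤ ‖c‖ := hQavg i hμipos
    have hcne : c ≠ 0 := by
      intro h0; rw [h0] at hca; simp at hca; linarith
    -- tsum collapses
    have hts : (∑' j, Set.indicator (Qc j)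
        (fun y => ((μ (Qc j)).toReal⁻¹ • ∫ z in Qc j, b₁ z ∂μ)⁻¹ •
          b₁ y • ((μ (Qc j)).toReal⁻¹ • ∫ z in Qc j, f z ∂μ)) x) =
        c⁻¹ • b₁ x • v := by
      rw [tsum_eq_single i]
      · rw [Set.indicator_of_mem hxi]
      · intro j hj
        have hxj : x ∉ Qc j := fun hxj => (hQdisj hj).le_bot ⟨hxj, hxi⟩
        exact Set.indicator_of_notMem hxj _
    rw [hts]
    by_cases hmeet : ∀ y ∈ Qc i, y ∉ ball x₀ (δ ^ m)
    · -- cube misses the support ball : everything is 0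
      have hint0 : (∫ z in Qc i, f z ∂μ) = 0 := by
        rw [setIntegral_congr_fun (hQmeas i) (g := fun _ => (0:Y))
          (fun y hy => hsupp y (hmeet y hy))]
        simp
      have : v = 0 := by rw [hv, hint0, smul_zero]
      rw [this, smul_zero, smul_zero, hsupp x (hmeet x hxi), sub_zero, norm_zero]
      exact norm_nonneg _
    · push_neg at hmeet
      obtain ⟨q, hqQ, hqball⟩ := hmeet
      have hxB : x ∈ B := by
        rw [hB]
        exact Set.mem_iUnion.mpr ⟨i, by rw [if_pos ⟨q, hqQ, hqball⟩]; exact hxi⟩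
      rw [Set.indicator_of_mem hxB]
      -- integrability
      have hfmeas : IntegrableOn f (Qc i) μ := by
        haveI : IsFiniteMeasure (μ.restrict (Qc i)) :=
          ⟨by rw [Measure.restrict_apply_univ]; exact lt_top_iff_ne_top.mpr hμitop⟩
        exact (hfp.restrict (Qc i)).integrable
          (ENNReal.one_le_ofReal.mpr hp.le)
      have hbmeas : IntegrableOn b₁ (Qc i) μ := by
        by_contra hcon
        have : (∫ z in Qc i, b₁ z ∂μ) = 0 := integral_undef hcon
        rw [hc, this, smul_zero] at hcne
        exact hcne rfl
      -- the main algebraic identity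
      have hid : f x - c⁻¹ • b₁ x • v = c⁻¹ • (b₁ x • (c • h x - v)) := by
        rw [smul_sub, smul_comm (b₁ x) c (h x), smul_sub, inv_smul_smul₀ hcne, hf]
      -- c • h x - v as an integral
      have hsm : c • h x = r⁻¹ • ∫ z in Qc i, b₁ z • h x ∂μ := by
        rw [hc, smul_assoc, integral_smul_const]
      have hcv : c • h x - v = r⁻¹ • ∫ z in Qc i, (b₁ z • h x - f z) ∂μ := by
        rw [hsm, hv, ← smul_sub, integral_sub (hbmeas.smul_const (h x)) hfmeas]
      have hnormint : ‖∫ z in Qc i, (b₁ z • h x - f z) ∂μ‖ ≤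
          (Cb * (L * (C₀ * δ ^ k₀))) * r := by
        apply norm_setIntegral_le_of_norm_le_const (lt_top_iff_ne_top.mpr hμitop)
        · intro z hz
          rw [hf]
          simp only
          rw [← smul_sub]
          calc ‖b₁ z • (h x - h z)‖ = ‖b₁ z‖ * ‖h x - h z‖ := norm_smul _ _
            _ ≤ Cb * (L * (C₀ * δ ^ k₀)) := by
                have h1 := hb₁ z
                have h2 := hLip x z
                have h3 := hdiam i x hxi z hz
                have h4 : ‖h x - h z‖ ≤ L * (C₀ * δ ^ k₀) := by nlinarith
                have h5 : (0:ℝ) ≤ ‖h x - h z‖ := norm_nonneg _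
                nlinarith [norm_nonneg (b₁ z)]
      have hcvnorm : ‖c • h x - v‖ ≤ Cb * (L * (C₀ * δ ^ k₀)) := by
        rw [hcv, norm_smul]
        have : ‖r⁻¹‖ = r⁻¹ := by
          rw [Real.norm_eq_abs, abs_of_pos (by positivity)]
        rw [this]
        calc r⁻¹ * ‖∫ z in Qc i, (b₁ z • h x - f z) ∂μ‖ ≤
            r⁻¹ * ((Cb * (L * (C₀ * δ ^ k₀))) * r) := by
              apply mul_le_mul_of_nonneg_left hnormint (by positivity)
          _ = Cb * (L * (C₀ * δ ^ k₀)) := by field_simp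
      calc ‖f x - c⁻¹ • b₁ x • v‖ = ‖c⁻¹ • (b₁ x • (c • h x - v))‖ := by rw [hid]
        _ = ‖c‖⁻¹ * (‖b₁ x‖ * ‖c • h x - v‖) := by
            rw [norm_smul, norm_smul, norm_inv]
        _ ≤ a⁻¹ * (Cb * (Cb * (L * (C₀ * δ ^ k₀)))) := by
            have h1 : ‖c‖⁻¹ ≤ a⁻¹ := inv_anti₀ ha hca
            have h2 : ‖b₁ x‖ * ‖c • h x - v‖ ≤ Cb * (Cb * (L * (C₀ * δ ^ k₀))) :=
              mul_le_mul (hb₁ x) hcvnorm (norm_nonneg _) hCb.le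
            exact mul_le_mul h1 h2 (by positivity) (by positivity)
        _ = ‖M‖ := by
            rw [Real.norm_eq_abs, abs_of_nonneg hM0, hM]; ring
  -- conclude via eLpNorm of the indicator of the big ball
  have hp0 : pe ≠ 0 := by
    rw [hpe]; simp only [ne_eq, ENNReal.ofReal_eq_zero, not_le]; linarith
  have hptop : pe ≠ ⊤ := ENNReal.ofReal_ne_top
  have step1 := eLpNorm_mono_ae (p := pe) (μ := μ) key
  have step2 : eLpNorm (Set.indicator B (fun _ => M)) pe μ =
      ‖M‖₊ * μ B ^ (1 / p) := by
    rw [eLpNorm_indicator_const hBmeas hp0 hptop, hpe, enorm_eq_nnnorm,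
      ENNReal.toReal_ofReal (by linarith)]
  -- measure of the big ball
  have hμB : μ B ≤ ENNReal.ofReal (Cl ^ n * lam x₀ (δ ^ m)) := by
    calc μ B ≤ μ (ball x₀ R) := measure_mono hBsub
      _ ≤ ENNReal.ofReal (lam x₀ R) := hμlam x₀ R hR0
      _ ≤ ENNReal.ofReal (Cl ^ n * lam x₀ (δ ^ m)) := by
          apply ENNReal.ofReal_le_ofReal
          calc lam x₀ R ≤ lam x₀ (2 ^ n * δ ^ m) := by
                apply hlammono x₀ R _ hR0
                rw [hR]
                nlinarith
            _ ≤ Cl ^ n * lam x₀ (δ ^ m) := lam_doub_iter Cl lam hCl hlamdoub n x₀ _ hδm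
  set lam0 : ℝ := lam x₀ (δ ^ m) with hlam0'
  have hlam0pos : 0 < lam0 := hlam0 x₀ _ hδm
  have hfinal : (‖M‖₊ : ENNReal) * μ B ^ (1 / p) ≤
      ENNReal.ofReal (a⁻¹ * Cb ^ 2 * C₀ * Cl ^ n * L * lam0 ^ (1 / p) * δ ^ k₀) := by
    have h1 : (‖M‖₊ : ENNReal) = ENNReal.ofReal M := Real.enorm_eq_ofReal hM0
    have h2 : μ B ^ (1 / p) ≤ ENNReal.ofReal ((Cl ^ n * lam0) ^ (1 / p)) := by
      rw [← ENNReal.ofReal_rpow_of_nonneg (by positivity) (by positivity)]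
      exact ENNReal.rpow_le_rpow hμB (by positivity)
    calc (‖M‖₊ : ENNReal) * μ B ^ (1 / p) ≤
        ENNReal.ofReal M * ENNReal.ofReal ((Cl ^ n * lam0) ^ (1 / p)) := by
          rw [h1]; exact mul_le_mul_right h2 _
      _ = ENNReal.ofReal (M * (Cl ^ n * lam0) ^ (1 / p)) :=
          (ENNReal.ofReal_mul hM0).symm
      _ ≤ ENNReal.ofReal (a⁻¹ * Cb ^ 2 * C₀ * Cl ^ n * L * lam0 ^ (1 / p) * δ ^ k₀) := by
          apply ENNReal.ofReal_le_ofReal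
          rw [Real.mul_rpow (by positivity) hlam0pos.le]
          have h3 : (Cl ^ n : ℝ) ^ (1 / p) ≤ Cl ^ n := by
            calc (Cl ^ n : ℝ) ^ (1 / p) ≤ (Cl ^ n : ℝ) ^ (1:ℝ) :=
                Real.rpow_le_rpow_of_exponent_le hCln (by
                  rw [div_le_one (by linarith)]; linarith)
              _ = Cl ^ n := Real.rpow_one _
          have h4 : (0:ℝ) ≤ lam0 ^ (1 / p) := by positivity
          rw [hM]
          nlinarith [mul_le_mul_of_nonneg_right h3 h4,
            mul_nonneg (mul_nonneg (mul_nonneg (inv_nonneg.mpr ha.le)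
              (by positivity : (0:ℝ) ≤ Cb ^ 2)) hC₀.le)
              (mul_nonneg hL (le_of_lt hδk))]
  calc eLpNorm _ pe μ ≤ eLpNorm (Set.indicator B (fun _ => M)) pe μ := step1
    _ = ‖M‖₊ * μ B ^ (1 / p) := step2
    _ ≤ ENNReal.ofReal (a⁻¹ * Cb ^ 2 * C₀ * Cl ^ n * L * lam0 ^ (1 / p) * δ ^ k₀) := hfinal
    _ = ENNReal.ofReal (a⁻¹ * Cb ^ 2 * C₀ * Cl ^ n * L * lam x₀ (δ ^ m) ^ (1 / p) * δ ^ k₀) := rfl
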